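/- Let d ≥ 1 be an integer and let (u_n)_{n ≥ 0} be the periodic binary sequence (0^d 1)^∞, i.e., u_n = 1 if n ≡ d (mod d+1) and u_n = 0 otherwise. For each N let ℐ(Γ_N) = 2ℓ(Γ_N)/δ(Γ_N) be the inconstancy of the polygonal curve Γ_N through (0,u₀), …, (N,u_N). Then ℐ(Γ_N) converges as N → ∞ and the inconstancy of the sequence is ℐ((u_n)) = (d − 1 + 2√2)/(d + 1). In particular, for d = 1 (the sequence (01)^∞) the inconstancy equals √2. -/

import Mathlib

noncomputable section
open MeasureTheory Real Set Filter
open scoped ENNReal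

/-- The point `(x, y)` of the Euclidean plane. -/
def pt (x y : ℝ) : EuclideanSpace ℝ (Fin 2) := WithLp.toLp 2 ![x, y]

/-- The polygonal curve `Γ_N` through `(0,u₀), (1,u₁), …, (N,u_N)`: the union of the
segments joining `(i, u_i)` to `(i+1, u_{i+1})` for `i = 0, …, N−1`. -/
def polyCurve (u : ℕ → ℝ) (N : ℕ) : Set (EuclideanSpace ℝ (Fin 2)) :=
  ⋃ i ∈ Finset.range N, segment ℝ (pt i (u i)) (pt (i + 1) (u (i + 1)))

/-- The length `ℓ(Γ_N) = Σ_{i<N} √(1 + (u_{i+1} − u_i)²)` of the polygonal curve. -/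
def polyLength (u : ℕ → ℝ) (N : ℕ) : ℝ :=
  ∑ i ∈ Finset.range N, Real.sqrt (1 + (u (i + 1) - u i) ^ 2)

/-- The perimeter `δ(Γ_N)` of the convex hull of the polygonal curve: the
one-dimensional Hausdorff measure of the frontier of the convex hull. -/
def polyDelta (u : ℕ → ℝ) (N : ℕ) : ℝ :=
  (μH[1] (frontier (convexHull ℝ (polyCurve u N)))).toReal

/-- The inconstancy `ℐ(Γ_N) := 2 ℓ(Γ_N) / δ(Γ_N)` of the polygonal curve. -/
def polyIncon (u : ℕ → ℝ) (N : ℕ) : ℝ :=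
  2 * polyLength u N / polyDelta u N


lemma pt_apply_zero (x y : ℝ) : pt x y 0 = x := rfl
lemma pt_apply_one (x y : ℝ) : pt x y 1 = y := rfl

lemma add_apply' (p q : EuclideanSpace ℝ (Fin 2)) (i : Fin 2) : (p + q) i = p i + q i := rfl
lemma smul_apply' (c : ℝ) (p : EuclideanSpace ℝ (Fin 2)) (i : Fin 2) : (c • p) i = c * p i := rfl

lemma combo_pt (t x1 y1 x2 y2 : ℝ) :
    (1 - t) • pt x1 y1 + t • pt x2 y2 = pt ((1-t)*x1 + t*x2) ((1-t)*y1 + t*y2) := by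
  ext i
  fin_cases i <;> simp [add_apply', smul_apply', pt]

lemma mem_segment_pt' {t x1 y1 x2 y2 x y : ℝ} (h0 : 0 ≤ t) (h1 : t ≤ 1)
    (hx : x = (1-t)*x1 + t*x2) (hy : y = (1-t)*y1 + t*y2) :
    pt x y ∈ segment ℝ (pt x1 y1) (pt x2 y2) := by
  subst hx hy
  rw [← combo_pt]
  exact ⟨1 - t, t, by linarith, h0, by ring, rfl⟩

lemma horiz_mem_segment {xl x xr : ℝ} (y : ℝ) (h1 : xl ≤ x) (h2 : x ≤ xr) :
    pt x y ∈ segment ℝ (pt xl y) (pt xr y) := by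
  rcases eq_or_lt_of_le (h1.trans h2) with h | h
  · have hx : x = xl := le_antisymm (h ▸ h2) h1
    subst hx
    exact left_mem_segment ℝ _ _
  · have hne : xr - xl ≠ 0 := by linarith
    have key : (x - xl)/(xr - xl) * (xr - xl) = x - xl := div_mul_cancel₀ _ hne
    refine mem_segment_pt' (t := (x - xl)/(xr - xl)) (div_nonneg (by linarith) (by linarith))
      ((div_le_one (by linarith)).2 (by linarith)) ?_ ?_
    · linear_combination (-1 : ℝ) * key
    · ring

lemma edist_pt (x1 y1 x2 y2 : ℝ) :
    edist (pt x1 y1) (pt x2 y2) = ENNReal.ofReal (Real.sqrt ((x1-x2)^2 + (y1-y2)^2)) := by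
  rw [edist_dist, EuclideanSpace.dist_eq]
  congr 1
  rw [Fin.sum_univ_two]
  simp [pt, Real.dist_eq, sq_abs]

lemma measurableSet_segment' (x y : EuclideanSpace ℝ (Fin 2)) :
    MeasurableSet (segment ℝ x y) := by
  rw [segment_eq_image]
  exact (isCompact_Icc.image (by fun_prop)).isClosed.measurableSet

lemma sqrt_sq_add_one_le (x : ℝ) : Real.sqrt (x^2 + 1) ≤ |x| + 1 := by
  have h := Real.sqrt_le_sqrt (show x^2 + 1 ≤ (|x|+1)^2 by nlinarith [abs_nonneg x, sq_abs x])
  rwa [Real.sqrt_sq (by positivity)] at h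

set_option maxHeartbeats 1000000 in
lemma polyDelta_bounds (u : ℕ → ℝ) (N a b n0 : ℕ)
    (hN : 1 ≤ N)
    (h01 : ∀ i, u i = 0 ∨ u i = 1)
    (haN : a ≤ N) (hbN : b ≤ N) (hn0N : n0 ≤ N)
    (hua : u a = 1) (hub : u b = 1) (hu0 : u 0 = 0) (hun0 : u n0 = 0)
    (hone : ∀ i ≤ N, u i = 1 → a ≤ i ∧ i ≤ b)
    (hzero : ∀ i ≤ N, u i = 0 → i ≤ n0) :
    (n0 : ℝ) + ((b : ℝ) - a) ≤ polyDelta u N ∧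
      polyDelta u N ≤ (n0 : ℝ) + ((b : ℝ) - a)
        + Real.sqrt ((a:ℝ)^2 + 1) + Real.sqrt (((b:ℝ) - n0)^2 + 1) := by
  set A : ℝ := (a : ℝ) with hA
  set B : ℝ := (b : ℝ) with hB
  set M : ℝ := (n0 : ℝ) with hM
  have hab : a ≤ b := (hone a haN hua).2
  have hAB : A ≤ B := by rw [hA, hB]; exact_mod_cast hab
  have hA0 : 0 ≤ A := Nat.cast_nonneg a
  have hM0 : 0 ≤ M := Nat.cast_nonneg n0
  -- the trapezoid
  set T : Set (EuclideanSpace ℝ (Fin 2)) :=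
    {p | 0 ≤ p 1 ∧ p 1 ≤ 1 ∧ A * p 1 ≤ p 0 ∧ p 0 ≤ M + (B - M) * p 1} with hT
  -- vertices
  set v0 := pt 0 0 with hv0
  set v1 := pt M 0 with hv1
  set v2 := pt B 1 with hv2
  set v3 := pt A 1 with hv3
  -- the points of the curve
  have hptT : ∀ i ≤ N, pt i (u i) ∈ T := by
    intro i hi
    rcases h01 i with h | h <;> rw [h] <;>
        refine ⟨?_, ?_, ?_, ?_⟩ <;> simp only [pt_apply_zero, pt_apply_one]
    · norm_num
    · norm_num
    · simp
    · have h2 := hzero i hi h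
      have : (i : ℝ) ≤ M := by rw [hM]; exact_mod_cast h2
      linarith
    · norm_num
    · norm_num
    · have h2 := (hone i hi h).1
      have : A ≤ (i : ℝ) := by rw [hA]; exact_mod_cast h2
      linarith
    · have h2 := (hone i hi h).2
      have : (i : ℝ) ≤ B := by rw [hB]; exact_mod_cast h2
      linarith
  have hTconv : Convex ℝ T := by
    intro p hp q hq s t hs ht hst
    obtain ⟨hp1, hp2, hp3, hp4⟩ := hp
    obtain ⟨hq1, hq2, hq3, hq4⟩ := hq
    have e0 : (s • p + t • q) 0 = s * p 0 + t * q 0 := by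
      rw [add_apply', smul_apply', smul_apply']
    have e1 : (s • p + t • q) 1 = s * p 1 + t * q 1 := by
      rw [add_apply', smul_apply', smul_apply']
    refine ⟨?_, ?_, ?_, ?_⟩ <;> simp only [e0, e1]
    · have := mul_nonneg hs hp1
      have := mul_nonneg ht hq1
      linarith
    · have := mul_le_of_le_one_right hs hp2
      have := mul_le_of_le_one_right ht hq2
      linarith
    · nlinarith [mul_le_mul_of_nonneg_left hp3 hs, mul_le_mul_of_nonneg_left hq3 ht]
    · nlinarith [mul_le_mul_of_nonneg_left hp4 hs, mul_le_mul_of_nonneg_left hq4 ht]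
  have hTclosed : IsClosed T := by
    have c0 : Continuous fun p : EuclideanSpace ℝ (Fin 2) => p 0 :=
      (EuclideanSpace.proj (0 : Fin 2)).continuous
    have c1 : Continuous fun p : EuclideanSpace ℝ (Fin 2) => p 1 :=
      (EuclideanSpace.proj (1 : Fin 2)).continuous
    have : T = {p : EuclideanSpace ℝ (Fin 2) | 0 ≤ p 1} ∩ ({p | p 1 ≤ 1} ∩
        ({p | A * p 1 ≤ p 0} ∩ {p | p 0 ≤ M + (B - M) * p 1})) := by
      ext p; simp [hT, Set.mem_setOf_eq, Set.mem_inter_iff, and_assoc]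
    rw [this]
    exact (isClosed_le continuous_const c1).inter ((isClosed_le c1 continuous_const).inter
      ((isClosed_le (by fun_prop) c0).inter (isClosed_le c0 (by fun_prop))))
  -- vertices on the curve
  have hmemCurve : ∀ i ≤ N, pt i (u i) ∈ polyCurve u N := by
    intro i hi
    rcases lt_or_eq_of_le hi with h | h
    · exact Set.mem_biUnion (Finset.mem_range.2 h) (left_mem_segment ℝ _ _)
    · subst h
      refine Set.mem_iUnion₂.2 ⟨i - 1, Finset.mem_range.2 (Nat.sub_lt hN Nat.one_pos), ?_⟩
      have h2 : i - 1 + 1 = i := Nat.succ_pred_eq_of_pos hN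
      have h3 : ((i - 1 : ℕ) : ℝ) + 1 = (i : ℝ) := by exact_mod_cast congrArg (fun n : ℕ => (n:ℝ)) h2
      rw [h2, h3]
      exact right_mem_segment ℝ _ _
  have hv0c : v0 ∈ polyCurve u N := by
    have := hmemCurve 0 (Nat.zero_le N); rwa [hu0, Nat.cast_zero] at this
  have hv1c : v1 ∈ polyCurve u N := by
    have := hmemCurve n0 hn0N; rwa [hun0] at this
  have hv2c : v2 ∈ polyCurve u N := by
    have := hmemCurve b hbN; rwa [hub] at this
  have hv3c : v3 ∈ polyCurve u N := by
    have := hmemCurve a haN; rwa [hua] at this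
  -- the convex hull equals T
  have hull_eq : convexHull ℝ (polyCurve u N) = T := by
    apply Set.Subset.antisymm
    · apply convexHull_min _ hTconv
      intro p hp
      obtain ⟨i, hi, hpmem⟩ := Set.mem_iUnion₂.1 hp
      have hi' : i < N := Finset.mem_range.1 hi
      have h1 := hptT i hi'.le
      have h2 := hptT (i+1) hi'
      have : (↑(i+1) : ℝ) = (i : ℝ) + 1 := by push_cast; ring
      rw [this] at h2
      exact hTconv.segment_subset h1 h2 hpmem
    · intro p hp
      obtain ⟨hp1, hp2, hp3, hp4⟩ := hp
      set x := p 0 with hx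
      set y := p 1 with hy
      have hpeq : p = pt x y := by
        ext i
        fin_cases i <;> rfl
      have hullconv := convex_convexHull ℝ (polyCurve u N)
      have hv0h := subset_convexHull ℝ _ hv0c
      have hv1h := subset_convexHull ℝ _ hv1c
      have hv2h := subset_convexHull ℝ _ hv2c
      have hv3h := subset_convexHull ℝ _ hv3c
      have hq1 : pt (A*y) y ∈ convexHull ℝ (polyCurve u N) := by
        refine hullconv.segment_subset hv0h hv3h ?_
        exact mem_segment_pt' hp1 hp2 (by ring) (by ring)
      have hq2 : pt (M + (B-M)*y) y ∈ convexHull ℝ (polyCurve u N) := by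
        refine hullconv.segment_subset hv1h hv2h ?_
        exact mem_segment_pt' hp1 hp2 (by ring) (by ring)
      rw [hpeq]
      exact hullconv.segment_subset hq1 hq2 (horiz_mem_segment y hp3 hp4)
  -- edges
  set Eb := segment ℝ v0 v1 with hEb
  set Et := segment ℝ v3 v2 with hEt
  set El := segment ℝ v0 v3 with hEl
  set Er := segment ℝ v1 v2 with hEr
  -- frontier is contained in the union of the four edges
  have hfrsub : frontier T ⊆ (Eb ∪ Et) ∪ (El ∪ Er) := by
    rw [hTclosed.frontier_eq]
    intro p ⟨hpT, hpnotint⟩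
    obtain ⟨hp1, hp2, hp3, hp4⟩ := hpT
    set x := p 0 with hx
    set y := p 1 with hy
    have hpeq : p = pt x y := by ext i; fin_cases i <;> rfl
    by_cases hc1 : y = 0
    · left; left
      rw [hpeq, hc1]
      exact horiz_mem_segment 0 (by rw [hc1] at hp3; linarith [mul_nonneg hA0 hp1])
        (by rw [hc1] at hp4; linarith)
    by_cases hc2 : y = 1
    · left; right
      rw [hpeq, hc2]
      exact horiz_mem_segment 1 (by rw [hc2] at hp3; linarith) (by rw [hc2] at hp4; linarith)
    by_cases hc3 : A * y = x
    · right; left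
      rw [hpeq]
      exact mem_segment_pt' hp1 hp2 (by rw [← hc3]; ring) (by ring)
    by_cases hc4 : x = M + (B - M) * y
    · right; right
      rw [hpeq]
      exact mem_segment_pt' hp1 hp2 (by rw [hc4]; ring) (by ring)
    -- otherwise p is in the interior, contradiction
    exfalso
    apply hpnotint
    have c0 : Continuous fun p : EuclideanSpace ℝ (Fin 2) => p 0 :=
      (EuclideanSpace.proj (0 : Fin 2)).continuous
    have c1 : Continuous fun p : EuclideanSpace ℝ (Fin 2) => p 1 :=
      (EuclideanSpace.proj (1 : Fin 2)).continuous
    have hOopen : IsOpen {q : EuclideanSpace ℝ (Fin 2) |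
        0 < q 1 ∧ q 1 < 1 ∧ A * q 1 < q 0 ∧ q 0 < M + (B - M) * q 1} := by
      have : {q : EuclideanSpace ℝ (Fin 2) |
          0 < q 1 ∧ q 1 < 1 ∧ A * q 1 < q 0 ∧ q 0 < M + (B - M) * q 1} =
          {q : EuclideanSpace ℝ (Fin 2) | 0 < q 1} ∩ ({q | q 1 < 1} ∩
          ({q | A * q 1 < q 0} ∩ {q | q 0 < M + (B - M) * q 1})) := by
        ext q; simp [Set.mem_setOf_eq, Set.mem_inter_iff, and_assoc]
      rw [this]
      exact (isOpen_lt continuous_const c1).inter ((isOpen_lt c1 continuous_const).inter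
        ((isOpen_lt (by fun_prop) c0).inter (isOpen_lt c0 (by fun_prop))))
    have hOsub : {q : EuclideanSpace ℝ (Fin 2) |
        0 < q 1 ∧ q 1 < 1 ∧ A * q 1 < q 0 ∧ q 0 < M + (B - M) * q 1} ⊆ T := by
      intro q ⟨h1, h2, h3, h4⟩; exact ⟨h1.le, h2.le, h3.le, h4.le⟩
    exact interior_maximal hOsub hOopen ⟨lt_of_le_of_ne hp1 (Ne.symm hc1),
      lt_of_le_of_ne hp2 hc2, lt_of_le_of_ne hp3 hc3, lt_of_le_of_ne hp4 hc4⟩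
  -- bottom and top edges are in the frontier
  have hysub : ∀ p ∈ Eb, p 1 = 0 := by
    intro p hp
    obtain ⟨s, t, hs, ht, hst, hp⟩ := hp
    rw [← hp, add_apply', smul_apply', smul_apply', hv0, hv1, pt_apply_one, pt_apply_one]
    ring
  have hysub' : ∀ p ∈ Et, p 1 = 1 := by
    intro p hp
    obtain ⟨s, t, hs, ht, hst, hp⟩ := hp
    rw [← hp, add_apply', smul_apply', smul_apply', hv3, hv2, pt_apply_one, pt_apply_one]
    linarith
  have hnotint : ∀ p : EuclideanSpace ℝ (Fin 2), (p 1 = 0 ∨ p 1 = 1) → p ∉ interior T := by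
    rintro p hcase hpint
    obtain ⟨ε, hε, hball⟩ := Metric.mem_nhds_iff.1 (mem_interior_iff_mem_nhds.1 hpint)
    rcases hcase with h | h
    · set p' := p - (ε/2) • EuclideanSpace.single (1 : Fin 2) (1:ℝ) with hp'
      have hdist : dist p' p < ε := by
        rw [hp', dist_eq_norm, sub_sub_cancel_left, norm_neg, norm_smul,
          EuclideanSpace.norm_single]
        simp [abs_of_pos hε]
        linarith
      have : p' ∈ T := hball (Metric.mem_ball.2 hdist)
      have hp'1 : p' 1 = -(ε/2) := by
        rw [hp']
        have : (p - (ε/2) • EuclideanSpace.single (1 : Fin 2) (1:ℝ)) 1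
            = p 1 - (ε/2) * (EuclideanSpace.single (1 : Fin 2) (1:ℝ)) 1 := rfl
        rw [this, EuclideanSpace.single_apply]
        simp [h]
      have := this.1
      rw [hp'1] at this
      linarith
    · set p' := p + (ε/2) • EuclideanSpace.single (1 : Fin 2) (1:ℝ) with hp'
      have hdist : dist p' p < ε := by
        rw [hp', dist_eq_norm, add_sub_cancel_left, norm_smul, EuclideanSpace.norm_single]
        simp [abs_of_pos hε]
        linarith
      have : p' ∈ T := hball (Metric.mem_ball.2 hdist)
      have hp'1 : p' 1 = 1 + ε/2 := by
        rw [hp', add_apply', smul_apply', EuclideanSpace.single_apply]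
        simp [h]
      have := this.2.1
      rw [hp'1] at this
      linarith
  have hv0T : v0 ∈ T := by
    have := hptT 0 (Nat.zero_le N); rwa [hu0, Nat.cast_zero] at this
  have hv1T : v1 ∈ T := by
    have := hptT n0 hn0N; rwa [hun0] at this
  have hv2T : v2 ∈ T := by
    have := hptT b hbN; rwa [hub] at this
  have hv3T : v3 ∈ T := by
    have := hptT a haN; rwa [hua] at this
  have hfrsup : Eb ∪ Et ⊆ frontier T := by
    rw [hTclosed.frontier_eq]
    rintro p (hp | hp)
    · exact ⟨hTconv.segment_subset hv0T hv1T hp, hnotint p (Or.inl (hysub p hp))⟩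
    · exact ⟨hTconv.segment_subset hv3T hv2T hp, hnotint p (Or.inr (hysub' p hp))⟩
  -- measure computations
  have hBA : (0:ℝ) ≤ B - A := by linarith
  have hs1 : 0 ≤ Real.sqrt (A^2+1) := Real.sqrt_nonneg _
  have hs2 : 0 ≤ Real.sqrt ((B-M)^2+1) := Real.sqrt_nonneg _
  have hmb : μH[1] Eb = ENNReal.ofReal M := by
    rw [hEb, hausdorffMeasure_segment, hv0, hv1, edist_pt,
      show ((0:ℝ)-M)^2 + ((0:ℝ)-0)^2 = M^2 by ring, Real.sqrt_sq hM0]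
  have hmt : μH[1] Et = ENNReal.ofReal (B - A) := by
    rw [hEt, hausdorffMeasure_segment, hv3, hv2, edist_pt,
      show (A-B)^2 + ((1:ℝ)-1)^2 = (B-A)^2 by ring, Real.sqrt_sq hBA]
  have hml : μH[1] El = ENNReal.ofReal (Real.sqrt (A^2 + 1)) := by
    rw [hEl, hausdorffMeasure_segment, hv0, hv3, edist_pt,
      show ((0:ℝ)-A)^2 + ((0:ℝ)-1)^2 = A^2 + 1 by ring]
  have hmr : μH[1] Er = ENNReal.ofReal (Real.sqrt ((B - M)^2 + 1)) := by
    rw [hEr, hausdorffMeasure_segment, hv1, hv2, edist_pt,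
      show (M-B)^2 + ((0:ℝ)-1)^2 = (B-M)^2 + 1 by ring]
  have hupper : μH[1] (frontier T) ≤
      ENNReal.ofReal (M + (B - A) + Real.sqrt (A^2+1) + Real.sqrt ((B-M)^2+1)) := by
    calc μH[1] (frontier T) ≤ μH[1] ((Eb ∪ Et) ∪ (El ∪ Er)) := measure_mono hfrsub
    _ ≤ (μH[1] Eb + μH[1] Et) + (μH[1] El + μH[1] Er) :=
        le_trans (measure_union_le _ _) (add_le_add (measure_union_le _ _) (measure_union_le _ _))
    _ = ENNReal.ofReal (M + (B - A) + Real.sqrt (A^2+1) + Real.sqrt ((B-M)^2+1)) := by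
        rw [hmb, hmt, hml, hmr, ← ENNReal.ofReal_add hM0 hBA, ← ENNReal.ofReal_add hs1 hs2,
          ← ENNReal.ofReal_add (by linarith) (by linarith)]
        congr 1
        ring
  have hlower : ENNReal.ofReal (M + (B - A)) ≤ μH[1] (frontier T) := by
    have hdisj : Disjoint Eb Et := by
      rw [Set.disjoint_left]
      intro p hpb hpt
      have h0 := hysub p hpb
      have h1 := hysub' p hpt
      rw [h0] at h1
      norm_num at h1
    calc ENNReal.ofReal (M + (B - A)) = μH[1] Eb + μH[1] Et := by
          rw [hmb, hmt, ← ENNReal.ofReal_add hM0 hBA]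
    _ = μH[1] (Eb ∪ Et) := (measure_union hdisj (measurableSet_segment' _ _)).symm
    _ ≤ μH[1] (frontier T) := measure_mono hfrsup
  have hfin : μH[1] (frontier T) ≠ ⊤ := (lt_of_le_of_lt hupper ENNReal.ofReal_lt_top).ne
  rw [polyDelta, hull_eq]
  constructor
  · have := ENNReal.toReal_mono hfin hlower
    rwa [ENNReal.toReal_ofReal (by linarith)] at this
  · have := ENNReal.toReal_mono (by simp) hupper
    rwa [ENNReal.toReal_ofReal (by linarith)] at this

lemma tendsto_div_of_bounded (g : ℕ → ℝ) (c C : ℝ)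
    (h : ∀ᶠ N : ℕ in atTop, |g N - c * N| ≤ C) :
    Tendsto (fun N : ℕ => g N / N) atTop (nhds c) := by
  have h1 : Tendsto (fun N : ℕ => c - C / N) atTop (nhds c) := by
    simpa using tendsto_const_nhds.sub (tendsto_const_div_atTop_nhds_zero_nat C)
  have h2 : Tendsto (fun N : ℕ => c + C / N) atTop (nhds c) := by
    simpa using tendsto_const_nhds.add (tendsto_const_div_atTop_nhds_zero_nat C)
  refine tendsto_of_tendsto_of_tendsto_of_le_of_le' h1 h2 ?_ ?_
  · filter_upwards [h, eventually_gt_atTop 0] with N hN hN0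
    have hNpos : (0:ℝ) < N := by exact_mod_cast hN0
    have habs := abs_le.1 hN
    have e1 : c - C/N = (c*N - C)/N := by field_simp
    rw [e1]
    gcongr
    linarith [habs.1]
  · filter_upwards [h, eventually_gt_atTop 0] with N hN hN0
    have hNpos : (0:ℝ) < N := by exact_mod_cast hN0
    have habs := abs_le.1 hN
    have e1 : c + C/N = (c*N + C)/N := by field_simp
    rw [e1]
    gcongr
    linarith [habs.2]

/-- Inconstancy of the periodic binary sequence `(0^d 1)^∞` (i.e., `u_n = 1` iff
`n ≡ d (mod d+1)`): the inconstancy exists and equals `(d − 1 + 2√2)/(d + 1)`; in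
particular for `d = 1` (the sequence `(01)^∞`) it equals `√2`. -/
theorem polyIncon_periodic (d : ℕ) (hd : 1 ≤ d) (u : ℕ → ℝ)
    (hu : ∀ n, u n = if n % (d + 1) = d then 1 else 0) :
    Tendsto (fun N : ℕ => polyIncon u N) atTop
      (nhds (((d : ℝ) - 1 + 2 * Real.sqrt 2) / ((d : ℝ) + 1))) ∧
    (d = 1 → ((d : ℝ) - 1 + 2 * Real.sqrt 2) / ((d : ℝ) + 1) = Real.sqrt 2) := by
  have hsqrt2 : (1:ℝ) ≤ Real.sqrt 2 := by
    rw [show (1:ℝ) = Real.sqrt 1 by simp]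
    exact Real.sqrt_le_sqrt (by norm_num)
  refine ⟨?_, ?_⟩
  swap
  · intro h1
    subst h1
    rw [show ((1:ℕ):ℝ) - 1 + 2 * Real.sqrt 2 = Real.sqrt 2 * 2 by push_cast; ring]
    rw [show ((1:ℕ):ℝ) + 1 = 2 by push_cast; ring]
    exact mul_div_cancel_right₀ _ two_ne_zero
  set m := d + 1 with hm
  have hmpos : 0 < m := by omega
  set P : ℝ := (d : ℝ) - 1 + 2 * Real.sqrt 2 with hP
  have hd1 : (1:ℝ) ≤ (d:ℝ) := by exact_mod_cast hd
  have hP0 : 0 ≤ P := by rw [hP]; linarith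
  have hMcast : ((m:ℕ):ℝ) = (d:ℝ) + 1 := by rw [hm]; push_cast; ring
  have h01 : ∀ i, u i = 0 ∨ u i = 1 := by intro i; rw [hu i]; split <;> simp
  have hone_iff : ∀ i, u i = 1 ↔ i % m = d := by
    intro i
    rw [hu i]
    constructor
    · intro h
      by_contra hc
      rw [if_neg hc] at h
      norm_num at h
    · intro h
      rw [if_pos h]
  have hzero_iff : ∀ i, u i = 0 ↔ ¬ (i % m = d) := by
    intro i
    rw [hu i]
    constructor
    · intro h hc
      rw [if_pos hc] at h
      norm_num at h
    · intro h
      rw [if_neg h]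
  -- periodicity of the length
  have hper : ∀ n, u (n + m) = u n := by
    intro n; rw [hu, hu, hm, Nat.add_mod_right]
  have hstep : ∀ t, polyLength u (m + t) = polyLength u m + polyLength u t := by
    intro t
    rw [polyLength, polyLength, polyLength, Finset.sum_range_add]
    congr 1
    apply Finset.sum_congr rfl
    intro i _
    rw [show m + i + 1 = i + 1 + m by ring, show m + i = i + m by ring, hper, hper]
  -- one period has length P
  have huval : ∀ i, i < m → u i = if i = d then 1 else 0 := by
    intro i hi
    rw [hu, Nat.mod_eq_of_lt hi]
  have hS : polyLength u m = P := by
    have hd' : d = (d-1)+1 := (Nat.succ_pred_eq_of_pos hd).symm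
    have hud : u d = 1 := by rw [huval d (by omega)]; simp
    have hud1 : u (d+1) = 0 := by
      rw [hu, hm, Nat.mod_self, if_neg (by omega)]
    have hudm1 : u (d-1) = 0 := by
      rw [huval (d-1) (by omega), if_neg (by omega)]
    rw [polyLength, hm, Finset.sum_range_succ, show d = (d-1)+1 from hd',
      Finset.sum_range_succ, ← hd']
    have e1 : Real.sqrt (1 + (u (d+1) - u d)^2) = Real.sqrt 2 := by
      rw [hud, hud1]; norm_num
    have e2 : Real.sqrt (1 + (u d - u (d-1))^2) = Real.sqrt 2 := by
      rw [hud, hudm1]; norm_num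
    have e3 : ∑ i ∈ Finset.range (d-1), Real.sqrt (1 + (u (i+1) - u i)^2)
        = ((d:ℝ) - 1) := by
      rw [Finset.sum_congr rfl (fun i hi => ?_), Finset.sum_const, Finset.card_range,
        nsmul_eq_mul, mul_one]
      · rw [Nat.cast_pred hd]
      · have hi' : i < d - 1 := Finset.mem_range.1 hi
        have h1 : u i = 0 := by rw [huval i (by omega), if_neg (by omega)]
        have h2 : u (i+1) = 0 := by rw [huval (i+1) (by omega), if_neg (by omega)]
        rw [h1, h2]
        norm_num
    rw [e1, e2, e3, hP]
    ring
  -- length over q periods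
  have hq : ∀ q r, polyLength u (q * m + r) = q * P + polyLength u r := by
    intro q
    induction q with
    | zero => intro r; simp
    | succ q ih =>
        intro r
        rw [show (q+1) * m + r = m + (q * m + r) by ring, hstep, ih, hS]
        push_cast
        ring
  have hfle : ∀ i, Real.sqrt (1 + (u (i+1) - u i)^2) ≤ Real.sqrt 2 := by
    intro i
    apply Real.sqrt_le_sqrt
    rcases h01 i with h | h <;> rcases h01 (i+1) with h' | h' <;> rw [h, h'] <;> norm_num
  have hl_nonneg : ∀ t, 0 ≤ polyLength u t :=
    fun t => Finset.sum_nonneg fun i _ => Real.sqrt_nonneg _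
  have hl_le : ∀ t, polyLength u t ≤ t * Real.sqrt 2 := by
    intro t
    calc polyLength u t ≤ ∑ _i ∈ Finset.range t, Real.sqrt 2 :=
          Finset.sum_le_sum fun i _ => hfle i
    _ = t * Real.sqrt 2 := by rw [Finset.sum_const, Finset.card_range, nsmul_eq_mul]
  -- length asymptotics
  have hlen : ∀ᶠ N : ℕ in atTop, |polyLength u N - (P/((d:ℝ)+1)) * N| ≤
      ((d:ℝ)+1) * Real.sqrt 2 + P := by
    filter_upwards with N
    set q := N / m with hqdef
    set r := N % m with hrdef
    have hNm : m * q + r = N := Nat.div_add_mod N m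
    have hrm : r < m := Nat.mod_lt N hmpos
    have hval : polyLength u N = q * P + polyLength u r := by
      rw [show N = q * m + r by rw [mul_comm q m]; exact hNm.symm, hq]
    have hNcast : (N:ℝ) = ((d:ℝ)+1) * q + r := by
      rw [← hMcast]
      exact_mod_cast congrArg (fun n : ℕ => (n:ℝ)) hNm.symm
    have hMpos : (0:ℝ) < (d:ℝ) + 1 := by linarith
    have e : polyLength u N - (P/((d:ℝ)+1)) * N = polyLength u r - P * r / ((d:ℝ)+1) := by
      rw [hval, hNcast]
      field_simp
      ring
    have hb1 : polyLength u r ≤ ((d:ℝ)+1) * Real.sqrt 2 := by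
      calc polyLength u r ≤ r * Real.sqrt 2 := hl_le r
      _ ≤ ((d:ℝ)+1) * Real.sqrt 2 := by
          have : (r:ℝ) ≤ (d:ℝ)+1 := by rw [← hMcast]; exact_mod_cast hrm.le
          nlinarith
    have hb2 : P * r / ((d:ℝ)+1) ≤ P := by
      rw [div_le_iff₀ hMpos]
      have : (r:ℝ) ≤ (d:ℝ)+1 := by rw [← hMcast]; exact_mod_cast hrm.le
      nlinarith
    have hb3 : 0 ≤ P * r / ((d:ℝ)+1) := by positivity
    rw [e, abs_le]
    constructor
    · linarith [hl_nonneg r]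
    · linarith
  -- delta asymptotics
  have hdel : ∀ᶠ N : ℕ in atTop, |polyDelta u N - 2 * N| ≤ 2 * ((d:ℝ)+1) + 2 := by
    filter_upwards [eventually_ge_atTop m] with N hNm
    have hN1 : 1 ≤ N := le_trans hmpos hNm
    -- the last index with value one
    have hdm := Nat.div_add_mod (N+1) m
    have hmod := Nat.mod_lt (N+1) (y := m) hmpos
    set q1 := (N+1) / m with hq1def
    have hq1pos : 1 ≤ q1 := by
      rw [hq1def]
      exact (Nat.one_le_div_iff hmpos).2 (by omega)
    set b := m * q1 - 1 with hbdef
    have hexp : m * q1 = m * (q1 - 1) + m := by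
      have h1 : q1 = (q1 - 1) + 1 := by omega
      calc m * q1 = m * ((q1 - 1) + 1) := by rw [← h1]
      _ = m * (q1 - 1) + m := by ring
    have hbfacts : b + 1 = m * q1 ∧ b ≤ N ∧ N + 1 ≤ b + m ∧ b = m * (q1 - 1) + d := by
      revert hexp hdm hbdef hmod
      generalize m * q1 = A
      generalize m * (q1 - 1) = A'
      generalize (N+1) % m = B
      intro h0 h1 h2 h3
      omega
    obtain ⟨hb1, hbN, hbge, hbeq⟩ := hbfacts
    have hub : u b = 1 := by
      rw [hone_iff, hbeq, Nat.mul_add_mod, Nat.mod_eq_of_lt (by omega)]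
    have hone : ∀ i ≤ N, u i = 1 → d ≤ i ∧ i ≤ b := by
      intro i hi h1
      rw [hone_iff] at h1
      constructor
      · calc d = i % m := h1.symm
        _ ≤ i := Nat.mod_le i m
      · have hmod1 : (i + 1) % m = 0 := by
          rw [Nat.add_mod, h1, Nat.mod_eq_of_lt (show 1 < m by omega), hm, Nat.mod_self]
        obtain ⟨k, hk⟩ := Nat.dvd_of_mod_eq_zero hmod1
        have hkle : k ≤ q1 := by
          have h2 : (i+1) / m = k := by rw [hk, Nat.mul_div_cancel_left _ hmpos]
          rw [← h2, hq1def]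
          exact Nat.div_le_div_right (by omega)
        have h3 : i + 1 ≤ b + 1 := by
          rw [hk, hb1]
          exact Nat.mul_le_mul_left m hkle
        omega
    -- the last index with value zero
    set n0 := if N % m = d then N - 1 else N with hn0def
    have hn0N : n0 ≤ N := by rw [hn0def]; split <;> omega
    have hn0ge : N ≤ n0 + 1 := by rw [hn0def]; split <;> omega
    have hun0 : u n0 = 0 := by
      rw [hzero_iff, hn0def]
      split
      · rename_i hc
        have hdm2 := Nat.div_add_mod N m
        rw [hc] at hdm2
        have : N - 1 = m * (N / m) + (d - 1) := by
          revert hdm2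
          generalize m * (N / m) = A
          intro h2
          omega
        rw [this, Nat.mul_add_mod, Nat.mod_eq_of_lt (by omega)]
        omega
      · rename_i hc
        exact hc
    have hzero : ∀ i ≤ N, u i = 0 → i ≤ n0 := by
      intro i hi h0
      rw [hzero_iff] at h0
      rw [hn0def]
      split
      · rename_i hc
        rcases eq_or_lt_of_le hi with h | h
        · exact absurd (h ▸ hc) h0
        · omega
      · exact hi
    have hud : u d = 1 := by rw [hone_iff, Nat.mod_eq_of_lt (by omega)]
    have hu0 : u 0 = 0 := by rw [hzero_iff, Nat.zero_mod]; omega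
    obtain ⟨hlo, hhi⟩ := polyDelta_bounds u N d b n0 hN1 h01 (by omega) hbN hn0N
      hud hub hu0 hun0 hone hzero
    -- numeric bounds
    have hbR : (N:ℝ) + 1 ≤ (b:ℝ) + ((d:ℝ)+1) := by
      rw [← hMcast]; exact_mod_cast hbge
    have hbRN : (b:ℝ) ≤ (N:ℝ) := by exact_mod_cast hbN
    have hn0R : (N:ℝ) ≤ (n0:ℝ) + 1 := by exact_mod_cast hn0ge
    have hn0RN : (n0:ℝ) ≤ (N:ℝ) := by exact_mod_cast hn0N
    have hdR : (d:ℝ) ≤ (b:ℝ) := by exact_mod_cast (hone d (by omega) hud).2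
    have hsq1 : Real.sqrt ((d:ℝ)^2 + 1) ≤ (d:ℝ) + 1 := by
      have := sqrt_sq_add_one_le (d:ℝ)
      rwa [abs_of_nonneg (by positivity)] at this
    have hsq2 : Real.sqrt (((b:ℝ) - n0)^2 + 1) ≤ ((d:ℝ)+1) + 1 := by
      have h2 := sqrt_sq_add_one_le ((b:ℝ) - n0)
      have h3 : |(b:ℝ) - n0| ≤ (d:ℝ)+1 := by
        rw [abs_le]
        constructor <;> linarith
      linarith
    rw [abs_le]
    constructor <;> linarith
  -- put everything together
  have hlenT : Tendsto (fun N : ℕ => polyLength u N / N) atTop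
      (nhds (P / ((d:ℝ)+1))) := tendsto_div_of_bounded _ _ _ hlen
  have hdelT : Tendsto (fun N : ℕ => polyDelta u N / N) atTop (nhds 2) :=
    tendsto_div_of_bounded _ _ _ hdel
  have hcomb : Tendsto (fun N : ℕ => 2 * (polyLength u N / N) / (polyDelta u N / N)) atTop
      (nhds (2 * (P / ((d:ℝ)+1)) / 2)) :=
    (hlenT.const_mul 2).div hdelT two_ne_zero
  rw [show 2 * (P / ((d:ℝ)+1)) / 2 = P / ((d:ℝ)+1) by ring] at hcomb
  refine hcomb.congr' ?_
  filter_upwards [eventually_ge_atTop 1] with N hN1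
  have hNne : ((N:ℝ)) ≠ 0 := by
    have : (0:ℝ) < N := by exact_mod_cast hN1
    linarith
  rw [polyIncon]
  rcases eq_or_ne (polyDelta u N) 0 with h | h
  · rw [h]
    simp
  · field_simp
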